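/- Let T₋, T₊ be orthogonal projectors on ℂ^N and set E^DD = Ran T₋ ∩ Ran T₊, E^ND = Ker T₋ ∩ Ran T₊, E^DN = Ran T₋ ∩ Ker T₊, E^NN = Ker T₋ ∩ Ker T₊. Then there exist a unique integer k ≥ 0, unique angles 0 < γ₁ < γ₂ < ⋯ < γ_k < π/2, and unique subspaces E[1], …, E[k] of ℂ^N such that: ℂ^N is the orthogonal direct sum E^DD ⊕ E^ND ⊕ E^DN ⊕ E^NN ⊕ E[1] ⊕ ⋯ ⊕ E[k], and for every i = 1, …, k, setting E[i]₋ = E[i] ∩ Ran T₋ and E[i]₊ = E[i] ∩ Ran T₊, one has E[i] = E[i]₋ + E[i]₊, dim E[i]₋ = dim E[i]₊, ‖T₊ x‖ = cos γ_i · ‖x‖ for all x ∈ E[i]₋, and ‖T₋ y‖ = cos γ_i · ‖y‖ for all y ∈ E[i]₊. -/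

import Mathlib

open Submodule Set

noncomputable section

/-- A single "twisted" piece of the decomposition: `E = E₋ + E₊` with
`E₋ = E ∩ Ran T₋`, `E₊ = E ∩ Ran T₊` of equal dimension, at angle `γ`. -/
def IsAngularPart {N : ℕ} (Tm Tp : EuclideanSpace ℂ (Fin N) →ₗ[ℂ] EuclideanSpace ℂ (Fin N))
    (γ : ℝ) (E : Submodule ℂ (EuclideanSpace ℂ (Fin N))) : Prop :=
  E ≠ ⊥ ∧
  E = (E ⊓ LinearMap.range Tm) ⊔ (E ⊓ LinearMap.range Tp) ∧
  Module.finrank ℂ (E ⊓ LinearMap.range Tm : Submodule ℂ (EuclideanSpace ℂ (Fin N))) =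
    Module.finrank ℂ (E ⊓ LinearMap.range Tp : Submodule ℂ (EuclideanSpace ℂ (Fin N))) ∧
  (∀ x ∈ E ⊓ LinearMap.range Tm, ‖Tp x‖ = Real.cos γ * ‖x‖) ∧
  (∀ y ∈ E ⊓ LinearMap.range Tp, ‖Tm y‖ = Real.cos γ * ‖y‖)

/-- The full orthogonal decomposition
`ℂ^N = E^DD ⊕ E^ND ⊕ E^DN ⊕ E^NN ⊕ E[1] ⊕ ⋯ ⊕ E[k]` associated with a pair of
orthogonal projectors `T₋, T₊`, with angles `0 < γ₁ < ⋯ < γ_k < π/2`. -/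
def IsAngularDecomposition {N : ℕ}
    (Tm Tp : EuclideanSpace ℂ (Fin N) →ₗ[ℂ] EuclideanSpace ℂ (Fin N))
    (k : ℕ) (γ : Fin k → ℝ) (E : Fin k → Submodule ℂ (EuclideanSpace ℂ (Fin N))) : Prop :=
  StrictMono γ ∧ (∀ i, 0 < γ i ∧ γ i < Real.pi / 2) ∧
  (LinearMap.range Tm ⊓ LinearMap.range Tp) ⊔ (LinearMap.ker Tm ⊓ LinearMap.range Tp) ⊔
      (LinearMap.range Tm ⊓ LinearMap.ker Tp) ⊔ (LinearMap.ker Tm ⊓ LinearMap.ker Tp) ⊔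
      (⨆ i, E i) = ⊤ ∧
  (LinearMap.range Tm ⊓ LinearMap.range Tp).IsOrtho (LinearMap.ker Tm ⊓ LinearMap.range Tp) ∧
  (LinearMap.range Tm ⊓ LinearMap.range Tp).IsOrtho (LinearMap.range Tm ⊓ LinearMap.ker Tp) ∧
  (LinearMap.range Tm ⊓ LinearMap.range Tp).IsOrtho (LinearMap.ker Tm ⊓ LinearMap.ker Tp) ∧
  (LinearMap.ker Tm ⊓ LinearMap.range Tp).IsOrtho (LinearMap.range Tm ⊓ LinearMap.ker Tp) ∧
  (LinearMap.ker Tm ⊓ LinearMap.range Tp).IsOrtho (LinearMap.ker Tm ⊓ LinearMap.ker Tp) ∧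
  (LinearMap.range Tm ⊓ LinearMap.ker Tp).IsOrtho (LinearMap.ker Tm ⊓ LinearMap.ker Tp) ∧
  (∀ i, (LinearMap.range Tm ⊓ LinearMap.range Tp).IsOrtho (E i) ∧
        (LinearMap.ker Tm ⊓ LinearMap.range Tp).IsOrtho (E i) ∧
        (LinearMap.range Tm ⊓ LinearMap.ker Tp).IsOrtho (E i) ∧
        (LinearMap.ker Tm ⊓ LinearMap.ker Tp).IsOrtho (E i)) ∧
  (∀ i j, i ≠ j → (E i).IsOrtho (E j)) ∧
  ∀ i, IsAngularPart Tm Tp (γ i) (E i)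

namespace AngularAux
open LinearMap Real
open scoped InnerProductSpace

variable {N : ℕ}

variable {P Q : EuclideanSpace ℂ (Fin N) →ₗ[ℂ] EuclideanSpace ℂ (Fin N)}

lemma idem_apply (hPi : P ∘ₗ P = P) (x : EuclideanSpace ℂ (Fin N)) : P (P x) = P x := by
  simpa using LinearMap.ext_iff.mp hPi x

lemma mem_range_iff (hPi : P ∘ₗ P = P) {x : EuclideanSpace ℂ (Fin N)} :
    x ∈ LinearMap.range P ↔ P x = x := by
  constructor
  · rintro ⟨y, rfl⟩; exact idem_apply hPi y
  · intro h; exact ⟨x, h⟩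

lemma inner_proj_self (hPs : P.IsSymmetric) (hPi : P ∘ₗ P = P) (x : EuclideanSpace ℂ (Fin N)) :
    ⟪x, P x⟫_ℂ = (‖P x‖ : ℂ) ^ 2 := by
  have h1 : ⟪P x, P x⟫_ℂ = ⟪x, P (P x)⟫_ℂ := hPs x (P x)
  rw [idem_apply hPi] at h1
  rw [← h1, inner_self_eq_norm_sq_to_K]
  norm_cast

lemma re_inner_proj_self (hPs : P.IsSymmetric) (hPi : P ∘ₗ P = P)
    (x : EuclideanSpace ℂ (Fin N)) :
    RCLike.re (⟪x, P x⟫_ℂ) = ‖P x‖ ^ 2 := by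
  rw [inner_proj_self hPs hPi]
  norm_cast

lemma norm_proj_le (hPs : P.IsSymmetric) (hPi : P ∘ₗ P = P) (x : EuclideanSpace ℂ (Fin N)) :
    ‖P x‖ ≤ ‖x‖ := by
  rcases eq_or_ne (P x) 0 with h | h
  · simp [h]
  · have h1 : ‖P x‖ ^ 2 = RCLike.re (⟪x, P x⟫_ℂ) := (re_inner_proj_self hPs hPi x).symm
    have h2 : RCLike.re (⟪x, P x⟫_ℂ) ≤ ‖⟪x, P x⟫_ℂ‖ := RCLike.re_le_norm _
    have h3 : ‖⟪x, P x⟫_ℂ‖ ≤ ‖x‖ * ‖P x‖ := norm_inner_le_norm _ _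
    have h4 : 0 < ‖P x‖ := norm_pos_iff.mpr h
    nlinarith

lemma proj_eq_of_norm_eq (hPs : P.IsSymmetric) (hPi : P ∘ₗ P = P)
    {x : EuclideanSpace ℂ (Fin N)} (h : ‖P x‖ = ‖x‖) : P x = x := by
  have expand : ‖x - P x‖ ^ 2 = ‖x‖ ^ 2 - 2 * RCLike.re (⟪x, P x⟫_ℂ) + ‖P x‖ ^ 2 := by
    exact_mod_cast @norm_sub_sq ℂ _ _ _ _ x (P x)
  rw [re_inner_proj_self hPs hPi, h] at expand
  have h0 : ‖x - P x‖ ^ 2 = 0 := by rw [expand]; ring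
  have h1 : x - P x = 0 := by
    have := (pow_eq_zero_iff (two_ne_zero)).mp h0
    exact norm_eq_zero.mp this
  have := sub_eq_zero.mp h1
  exact this.symm

lemma inner_ker_range (hPs : P.IsSymmetric) {x y : EuclideanSpace ℂ (Fin N)}
    (hx : x ∈ LinearMap.ker P) : ⟪x, P y⟫_ℂ = 0 := by
  have : ⟪P x, y⟫_ℂ = ⟪x, P y⟫_ℂ := hPs x y
  rw [← this, LinearMap.mem_ker.mp hx, inner_zero_left]

lemma inner_range_ker (hPs : P.IsSymmetric) {x y : EuclideanSpace ℂ (Fin N)}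
    (hy : y ∈ LinearMap.ker P) : ⟪P x, y⟫_ℂ = 0 := by
  rw [hPs x y, LinearMap.mem_ker.mp hy, inner_zero_right]


/-- The eigenspace of `P Q P` with eigenvalue `c`. -/
def eigA (P Q : EuclideanSpace ℂ (Fin N) →ₗ[ℂ] EuclideanSpace ℂ (Fin N)) (c : ℝ) :
    Submodule ℂ (EuclideanSpace ℂ (Fin N)) :=
  Module.End.eigenspace (P ∘ₗ Q ∘ₗ P) (c : ℂ)

lemma mem_eigA {c : ℝ} {x : EuclideanSpace ℂ (Fin N)} :
    x ∈ eigA P Q c ↔ P (Q (P x)) = (c : ℂ) • x := by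
  rw [eigA, Module.End.mem_eigenspace_iff]
  simp [LinearMap.comp_apply]

lemma opA_symm (hPs : P.IsSymmetric) (hQs : Q.IsSymmetric) :
    (P ∘ₗ Q ∘ₗ P).IsSymmetric := by
  intro x y
  simp only [LinearMap.comp_apply]
  rw [hPs (Q (P x)) y, hQs (P x) (P y), hPs x (Q (P y))]

lemma eigA_fixed (hPi : P ∘ₗ P = P) {c : ℝ} (hc : c ≠ 0)
    {x : EuclideanSpace ℂ (Fin N)} (hx : x ∈ eigA P Q c) : P x = x := by
  rw [mem_eigA] at hx
  have h1 : P (P (Q (P x))) = P ((c : ℂ) • x) := congrArg P hx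
  rw [idem_apply hPi, hx, map_smul] at h1
  have h2 : (c : ℂ) • (P x - x) = 0 := by
    rw [smul_sub, ← h1, sub_self]
  have hc' : (c : ℂ) ≠ 0 := by exact_mod_cast hc
  have := smul_eq_zero.mp h2
  rcases this with h | h
  · exact absurd h hc'
  · exact sub_eq_zero.mp h

lemma eigA_le_range (hPi : P ∘ₗ P = P) {c : ℝ} (hc : c ≠ 0) :
    eigA P Q c ≤ LinearMap.range P := fun x hx => ⟨x, eigA_fixed hPi hc hx⟩

lemma inner_opA (hPs : P.IsSymmetric) (hQs : Q.IsSymmetric) (hQi : Q ∘ₗ Q = Q)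
    (x : EuclideanSpace ℂ (Fin N)) :
    ⟪x, P (Q (P x))⟫_ℂ = (‖Q (P x)‖ : ℂ) ^ 2 := by
  rw [← hPs x (Q (P x))]
  exact inner_proj_self hQs hQi (P x)

lemma norm_sq_eigA (hPs : P.IsSymmetric) (hPi : P ∘ₗ P = P) (hQs : Q.IsSymmetric)
    (hQi : Q ∘ₗ Q = Q) {c : ℝ} (hc : c ≠ 0)
    {x : EuclideanSpace ℂ (Fin N)} (hx : x ∈ eigA P Q c) :
    ‖Q x‖ ^ 2 = c * ‖x‖ ^ 2 := by
  have hfix := eigA_fixed hPi hc hx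
  have h1 : ⟪x, P (Q (P x))⟫_ℂ = (‖Q x‖ : ℂ) ^ 2 := by
    rw [inner_opA hPs hQs hQi, hfix]
  have h2 : ⟪x, P (Q (P x))⟫_ℂ = (c : ℂ) * (‖x‖ : ℂ) ^ 2 := by
    rw [mem_eigA.mp hx, inner_smul_right, inner_self_eq_norm_sq_to_K]
    rfl
  rw [h1] at h2
  exact_mod_cast h2

/-- Eigenvalues of `P Q P` are real numbers in `[0,1]`. -/
lemma eig_nonbot_real (hPs : P.IsSymmetric) (hPi : P ∘ₗ P = P) (hQs : Q.IsSymmetric)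
    (hQi : Q ∘ₗ Q = Q) {μ : ℂ}
    (h : Module.End.eigenspace (P ∘ₗ Q ∘ₗ P) μ ≠ ⊥) :
    ∃ c : ℝ, μ = (c : ℂ) ∧ 0 ≤ c ∧ c ≤ 1 := by
  obtain ⟨x, hx, hx0⟩ := (Submodule.ne_bot_iff _).mp h
  rw [Module.End.mem_eigenspace_iff] at hx
  have hx' : P (Q (P x)) = μ • x := by simpa [LinearMap.comp_apply] using hx
  have h1 : ⟪x, P (Q (P x))⟫_ℂ = (‖Q (P x)‖ : ℂ) ^ 2 := inner_opA hPs hQs hQi x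
  have h2 : ⟪x, P (Q (P x))⟫_ℂ = μ * (‖x‖ : ℂ) ^ 2 := by
    rw [hx', inner_smul_right, inner_self_eq_norm_sq_to_K]
    rfl
  have hxn : (0:ℝ) < ‖x‖ := norm_pos_iff.mpr hx0
  have hne : ((‖x‖ : ℂ)) ^ 2 ≠ 0 := by
    simp only [ne_eq, pow_eq_zero_iff, OfNat.ofNat_ne_zero, not_false_eq_true]
    exact_mod_cast hxn.ne'
  have h3 : μ * (‖x‖ : ℂ) ^ 2 = (‖Q (P x)‖ : ℂ) ^ 2 := by rw [← h2, h1]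
  refine ⟨‖Q (P x)‖ ^ 2 / ‖x‖ ^ 2, ?_, ?_, ?_⟩
  · push_cast
    rw [eq_div_iff hne]
    exact h3
  · positivity
  · rw [div_le_one (by positivity)]
    have hq : ‖Q (P x)‖ ≤ ‖P x‖ := norm_proj_le hQs hQi (P x)
    have hp : ‖P x‖ ≤ ‖x‖ := norm_proj_le hPs hPi x
    nlinarith [norm_nonneg (Q (P x)), norm_nonneg (P x)]

lemma eigA_one (hPs : P.IsSymmetric) (hPi : P ∘ₗ P = P) (hQs : Q.IsSymmetric)
    (hQi : Q ∘ₗ Q = Q) :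
    eigA P Q 1 = LinearMap.range P ⊓ LinearMap.range Q := by
  apply le_antisymm
  · intro x hx
    have hfix : P x = x := eigA_fixed hPi one_ne_zero hx
    have hnq : ‖Q x‖ ^ 2 = 1 * ‖x‖ ^ 2 := norm_sq_eigA hPs hPi hQs hQi one_ne_zero hx
    have hq : ‖Q x‖ = ‖x‖ := by
      rw [one_mul] at hnq
      have := abs_eq_abs.mpr (Or.inl (by nlinarith [norm_nonneg (Q x), norm_nonneg x] : ‖Q x‖ = ‖x‖))
      nlinarith [norm_nonneg (Q x), norm_nonneg x]
    have hqfix : Q x = x := proj_eq_of_norm_eq hQs hQi hq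
    exact ⟨(mem_range_iff hPi).mpr hfix, (mem_range_iff hQi).mpr hqfix⟩
  · rintro x ⟨hxp, hxq⟩
    rw [mem_eigA, (mem_range_iff hPi).mp hxp, (mem_range_iff hQi).mp hxq,
      (mem_range_iff hPi).mp hxp]
    simp

lemma mem_eigA_zero (hPs : P.IsSymmetric) (hQs : Q.IsSymmetric) (hQi : Q ∘ₗ Q = Q)
    {x : EuclideanSpace ℂ (Fin N)} :
    x ∈ eigA P Q 0 ↔ Q (P x) = 0 := by
  rw [mem_eigA]
  constructor
  · intro h
    have h1 : ⟪x, P (Q (P x))⟫_ℂ = (‖Q (P x)‖ : ℂ) ^ 2 := inner_opA hPs hQs hQi x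
    rw [h] at h1
    simp only [Complex.ofReal_zero, zero_smul, inner_zero_right] at h1
    have : (‖Q (P x)‖ : ℂ) ^ 2 = 0 := h1.symm
    have : ‖Q (P x)‖ = 0 := by exact_mod_cast pow_eq_zero_iff two_ne_zero |>.mp this
    exact norm_eq_zero.mp this
  · intro h
    rw [h]
    simp

lemma map_eigA_eigB (hPi : P ∘ₗ P = P) (hQi : Q ∘ₗ Q = Q) {c : ℝ} (hc : c ≠ 0)
    {x : EuclideanSpace ℂ (Fin N)} (hx : x ∈ eigA P Q c) : Q x ∈ eigA Q P c := by
  have hfix : P x = x := eigA_fixed hPi hc hx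
  have hAx : P (Q x) = (c : ℂ) • x := by
    have := mem_eigA.mp hx
    rwa [hfix] at this
  rw [mem_eigA, idem_apply hQi, hAx, map_smul]

lemma finrank_eigA_eq (hPs : P.IsSymmetric) (hPi : P ∘ₗ P = P) (hQs : Q.IsSymmetric)
    (hQi : Q ∘ₗ Q = Q) {c : ℝ} (hc : 0 < c) :
    Module.finrank ℂ (eigA P Q c) = Module.finrank ℂ (eigA Q P c) := by
  have key : ∀ (R S : EuclideanSpace ℂ (Fin N) →ₗ[ℂ] EuclideanSpace ℂ (Fin N)),
      R.IsSymmetric → (R ∘ₗ R = R) → S.IsSymmetric → (S ∘ₗ S = S) →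
      Module.finrank ℂ (eigA R S c) ≤ Module.finrank ℂ (eigA S R c) := by
    intro R S hRs hRi hSs hSi
    have hmap : ∀ x ∈ eigA R S c, S x ∈ eigA S R c :=
      fun x hx => map_eigA_eigB hRi hSi hc.ne' hx
    have hinj : ∀ x ∈ eigA R S c, S x = 0 → x = 0 := by
      intro x hx h0
      have := norm_sq_eigA hRs hRi hSs hSi hc.ne' hx
      rw [h0] at this
      simp only [norm_zero, ne_eq, OfNat.ofNat_ne_zero, not_false_eq_true, zero_pow] at this
      have hx2 : ‖x‖ ^ 2 = 0 := by
        rcases mul_eq_zero.mp this.symm with h | h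
        · exact absurd h hc.ne'
        · exact h
      have := pow_eq_zero_iff two_ne_zero |>.mp hx2
      exact norm_eq_zero.mp this
    let f : eigA R S c →ₗ[ℂ] eigA S R c := S.restrict hmap
    have hfinj : Function.Injective f := by
      intro a b hab
      ext1
      have h1 : S a.1 = S b.1 := by
        have := congrArg Subtype.val hab
        simpa [f, LinearMap.restrict_apply] using this
      have : S (a.1 - b.1) = 0 := by rw [map_sub, h1, sub_self]
      have hmem : (a.1 - b.1) ∈ eigA R S c := sub_mem a.2 b.2
      have := hinj _ hmem this
      exact sub_eq_zero.mp this
    exact LinearMap.finrank_le_finrank_of_injective hfinj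
  exact le_antisymm (key P Q hPs hPi hQs hQi) (key Q P hQs hQi hPs hPi)

lemma isOrtho_range_ker (hPs : P.IsSymmetric) :
    (LinearMap.range P).IsOrtho (LinearMap.ker P) := by
  rw [Submodule.isOrtho_iff_inner_eq]
  rintro u ⟨u', rfl⟩ v hv
  exact inner_range_ker hPs hv

lemma eig_isOrtho (hPs : P.IsSymmetric) (hQs : Q.IsSymmetric) {μ ν : ℂ} (h : μ ≠ ν) :
    (Module.End.eigenspace (P ∘ₗ Q ∘ₗ P) μ).IsOrtho
      (Module.End.eigenspace (P ∘ₗ Q ∘ₗ P) ν) := by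
  rw [Submodule.isOrtho_iff_inner_eq]
  intro u hu v hv
  exact (opA_symm hPs hQs).orthogonalFamily_eigenspaces h ⟨u, hu⟩ ⟨v, hv⟩

lemma eigA_isOrtho (hPs : P.IsSymmetric) (hQs : Q.IsSymmetric) {c c' : ℝ} (h : c ≠ c') :
    (eigA P Q c).IsOrtho (eigA P Q c') :=
  eig_isOrtho hPs hQs (by exact_mod_cast h)

lemma eigA_isOrtho_eigB (hPs : P.IsSymmetric) (hPi : P ∘ₗ P = P) (hQs : Q.IsSymmetric)
    (hQi : Q ∘ₗ Q = Q) {c c' : ℝ} (hc : c ≠ 0) (hc' : c' ≠ 0) (hne : c ≠ c') :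
    (eigA P Q c).IsOrtho (eigA Q P c') := by
  rw [Submodule.isOrtho_iff_inner_eq]
  intro x hx y hy
  have hPx : P x = x := eigA_fixed hPi hc hx
  have hQy : Q y = y := eigA_fixed hQi hc' hy
  have h1 : ⟪P (Q (P x)), y⟫_ℂ = (c : ℂ) * ⟪x, y⟫_ℂ := by
    rw [mem_eigA.mp hx, inner_smul_left, Complex.conj_ofReal]
  have h2 : ⟪P (Q (P x)), y⟫_ℂ = ⟪x, P (Q (P y))⟫_ℂ := by
    have := opA_symm hPs hQs x y
    simpa [LinearMap.comp_apply] using this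
  have h3 : Q (P y) = (c' : ℂ) • y := by
    have := mem_eigA.mp hy
    rwa [hQy] at this
  have h4 : ⟪x, P (Q (P y))⟫_ℂ = (c' : ℂ) * ⟪x, y⟫_ℂ := by
    rw [h3, map_smul, inner_smul_right, ← hPs x y, hPx]
  have h5 : ((c : ℂ) - (c' : ℂ)) * ⟪x, y⟫_ℂ = 0 := by
    rw [sub_mul, ← h1, h2, h4, sub_self]
  rcases mul_eq_zero.mp h5 with h | h
  · exfalso
    apply hne
    have : (c : ℂ) = (c' : ℂ) := by linear_combination h
    exact_mod_cast this
  · exact h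

lemma ortho_split {S T : Submodule ℂ (EuclideanSpace ℂ (Fin N))} (hST : S.IsOrtho T)
    {z : EuclideanSpace ℂ (Fin N)} (hz : z ∈ S ⊔ T) (hzT : ∀ t ∈ T, ⟪t, z⟫_ℂ = 0) :
    z ∈ S := by
  obtain ⟨s, hs, t, ht, rfl⟩ := Submodule.mem_sup.mp hz
  have h2 : ⟪t, s⟫_ℂ = 0 := by
    have := Submodule.isOrtho_iff_inner_eq.mp hST s hs t ht
    rw [← inner_conj_symm, this, map_zero]
  have h1 : ⟪t, s + t⟫_ℂ = 0 := hzT t ht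
  rw [inner_add_right, h2, zero_add] at h1
  have : t = 0 := inner_self_eq_zero.mp h1
  rw [this, add_zero]
  exact hs

lemma ortho_compl_eq {S T : Submodule ℂ (EuclideanSpace ℂ (Fin N))} (hST : S.IsOrtho T)
    (htop : S ⊔ T = ⊤) : T = Sᗮ := by
  apply le_antisymm
  · exact hST.symm
  · intro z hz
    have hz' : z ∈ T ⊔ S := by rw [sup_comm, htop]; trivial
    refine ortho_split hST.symm hz' ?_
    intro t ht
    exact (Submodule.mem_orthogonal S z).mp hz t ht

lemma finrank_finset_sup_eq_sum {ι : Type*} [DecidableEq ι]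
    (F : ι → Submodule ℂ (EuclideanSpace ℂ (Fin N)))
    (hortho : Pairwise fun i j => (F i).IsOrtho (F j)) (s : Finset ι) :
    Module.finrank ℂ (s.sup F : Submodule ℂ (EuclideanSpace ℂ (Fin N))) = ∑ i ∈ s, Module.finrank ℂ (F i) := by
  induction s using Finset.cons_induction with
  | empty => simp
  | cons a s ha ih =>
    rw [Finset.sup_cons, Finset.sum_cons, ← ih]
    have horth : (F a).IsOrtho (s.sup F) := by
      rw [Finset.sup_eq_iSup, Submodule.isOrtho_iSup_right]
      intro i
      rw [Submodule.isOrtho_iSup_right]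
      intro hi
      exact hortho (fun h => ha (h ▸ hi))
    have hdisj : F a ⊓ s.sup F = ⊥ := disjoint_iff.mp horth.disjoint
    have := Submodule.finrank_sup_add_finrank_inf_eq (F a) (s.sup F)
    rw [hdisj, finrank_bot] at this
    omega

lemma finrank_iSup_eq_sum {k : ℕ} (F : Fin k → Submodule ℂ (EuclideanSpace ℂ (Fin N)))
    (hortho : Pairwise fun i j => (F i).IsOrtho (F j)) :
    Module.finrank ℂ (⨆ i, F i : Submodule ℂ (EuclideanSpace ℂ (Fin N)))
      = ∑ i, Module.finrank ℂ (F i) := by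
  rw [← Finset.sup_univ_eq_iSup]
  exact finrank_finset_sup_eq_sum F hortho Finset.univ

lemma sq_eq_of_nonneg {a b : ℝ} (ha : 0 ≤ a) (hb : 0 ≤ b) (h : a ^ 2 = b ^ 2) : a = b := by
  nlinarith

lemma cos_sq_injOn {a b : ℝ} (ha : a ∈ Set.Ioo 0 (π / 2)) (hb : b ∈ Set.Ioo 0 (π / 2))
    (h : Real.cos a ^ 2 = Real.cos b ^ 2) : a = b := by
  have hca : 0 < Real.cos a := Real.cos_pos_of_mem_Ioo ⟨by linarith [ha.1, Real.pi_div_two_pos], ha.2⟩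
  have hcb : 0 < Real.cos b := Real.cos_pos_of_mem_Ioo ⟨by linarith [hb.1, Real.pi_div_two_pos], hb.2⟩
  have hcc : Real.cos a = Real.cos b := sq_eq_of_nonneg hca.le hcb.le h
  have hpi := Real.pi_pos
  exact Real.injOn_cos ⟨ha.1.le, by linarith [ha.2]⟩ ⟨hb.1.le, by linarith [hb.2]⟩ hcc

lemma cos_sq_mem_Ioo {a : ℝ} (ha : a ∈ Set.Ioo 0 (π / 2)) :
    Real.cos a ^ 2 ∈ Set.Ioo (0:ℝ) 1 := by
  have hca : 0 < Real.cos a := Real.cos_pos_of_mem_Ioo ⟨by linarith [ha.1, Real.pi_div_two_pos], ha.2⟩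
  have hlt : Real.cos a < 1 := by
    have h0 : Real.cos 0 = 1 := Real.cos_zero
    have := Real.strictAntiOn_cos (Set.mem_Icc.mpr ⟨le_refl 0, Real.pi_pos.le⟩)
      (Set.mem_Icc.mpr ⟨ha.1.le, by linarith [ha.2, Real.pi_div_two_pos, Real.pi_pos]⟩) ha.1
    rwa [h0] at this
  constructor
  · positivity
  · nlinarith

/-- The set of angles appearing in the decomposition. -/
def angleSet (P Q : EuclideanSpace ℂ (Fin N) →ₗ[ℂ] EuclideanSpace ℂ (Fin N)) : Set ℝ :=
  {a | a ∈ Set.Ioo 0 (π / 2) ∧ eigA P Q (Real.cos a ^ 2) ≠ ⊥}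

lemma angleSet_finite (P Q : EuclideanSpace ℂ (Fin N) →ₗ[ℂ] EuclideanSpace ℂ (Fin N)) :
    (angleSet P Q).Finite := by
  have hfin : Set.Finite (Module.End.HasEigenvalue (P ∘ₗ Q ∘ₗ P)) :=
    Module.End.finite_hasEigenvalue (P ∘ₗ Q ∘ₗ P)
  apply Set.Finite.of_finite_image (f := fun a : ℝ => ((Real.cos a ^ 2 : ℝ) : ℂ))
  · apply hfin.subset
    rintro z ⟨a, ha, rfl⟩
    exact ha.2
  · intro a ha b hb h
    have h' : ((Real.cos a ^ 2 : ℝ) : ℂ) = ((Real.cos b ^ 2 : ℝ) : ℂ) := h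
    exact cos_sq_injOn ha.1 hb.1 (by exact_mod_cast h')

/-- The number of distinct angles. -/
def kVal (P Q : EuclideanSpace ℂ (Fin N) →ₗ[ℂ] EuclideanSpace ℂ (Fin N)) : ℕ :=
  (angleSet_finite P Q).toFinset.card

/-- The increasing enumeration of the angles. -/
def gammaFun (P Q : EuclideanSpace ℂ (Fin N) →ₗ[ℂ] EuclideanSpace ℂ (Fin N)) :
    Fin (kVal P Q) → ℝ :=
  fun i => (angleSet_finite P Q).toFinset.orderEmbOfFin rfl i

/-- The angular pieces. -/
def EFun (P Q : EuclideanSpace ℂ (Fin N) →ₗ[ℂ] EuclideanSpace ℂ (Fin N)) :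
    Fin (kVal P Q) → Submodule ℂ (EuclideanSpace ℂ (Fin N)) :=
  fun i => eigA P Q (Real.cos (gammaFun P Q i) ^ 2) ⊔ eigA Q P (Real.cos (gammaFun P Q i) ^ 2)

lemma gammaFun_strictMono (P Q : EuclideanSpace ℂ (Fin N) →ₗ[ℂ] EuclideanSpace ℂ (Fin N)) :
    StrictMono (gammaFun P Q) :=
  ((angleSet_finite P Q).toFinset.orderEmbOfFin rfl).strictMono

lemma gammaFun_mem (P Q : EuclideanSpace ℂ (Fin N) →ₗ[ℂ] EuclideanSpace ℂ (Fin N))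
    (i : Fin (kVal P Q)) : gammaFun P Q i ∈ angleSet P Q := by
  have := (angleSet_finite P Q).toFinset.orderEmbOfFin_mem rfl i
  rwa [Set.Finite.mem_toFinset] at this

lemma inf_sup_range (hPs : P.IsSymmetric) (hPi : P ∘ₗ P = P) (hQs : Q.IsSymmetric)
    (hQi : Q ∘ₗ Q = Q) {c : ℝ} (hc0 : 0 < c) (hc1 : c < 1) :
    (eigA P Q c ⊔ eigA Q P c) ⊓ LinearMap.range P = eigA P Q c := by
  apply le_antisymm
  · rintro x ⟨hxE, hxU⟩
    obtain ⟨u, hu, w, hw, rfl⟩ := Submodule.mem_sup.mp hxE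
    have hPu : P u = u := eigA_fixed hPi hc0.ne' hu
    have hPuw : P (u + w) = u + w := (mem_range_iff hPi).mp hxU
    have hPw : P w = w := by
      have : P u + P w = u + w := by rw [← map_add]; exact hPuw
      rw [hPu] at this
      exact add_left_cancel this
    have hQw : Q w = w := eigA_fixed hQi hc0.ne' hw
    have hw0 : w = 0 := by
      have hmem := mem_eigA.mp hw
      rw [hQw, hPw, hQw] at hmem
      -- hmem : w = c • w
      have h1 : (1 - (c : ℂ)) • w = 0 := by
        rw [sub_smul, one_smul, ← hmem, sub_self]
      rcases smul_eq_zero.mp h1 with h | h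
      · exfalso
        have : (c : ℂ) = 1 := by linear_combination -h
        have : c = 1 := by exact_mod_cast this
        exact hc1.ne this
      · exact h
    rw [hw0, add_zero]
    exact hu
  · exact le_inf le_sup_left (eigA_le_range hPi hc0.ne')

lemma norm_eigA_cos {a : ℝ} (ha : a ∈ Set.Ioo 0 (π / 2)) (hPs : P.IsSymmetric)
    (hPi : P ∘ₗ P = P) (hQs : Q.IsSymmetric) (hQi : Q ∘ₗ Q = Q)
    {x : EuclideanSpace ℂ (Fin N)} (hx : x ∈ eigA P Q (Real.cos a ^ 2)) :
    ‖Q x‖ = Real.cos a * ‖x‖ := by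
  have hc := cos_sq_mem_Ioo ha
  have h := norm_sq_eigA hPs hPi hQs hQi hc.1.ne' hx
  have hca : 0 < Real.cos a := Real.cos_pos_of_mem_Ioo ⟨by linarith [ha.1, Real.pi_div_two_pos], ha.2⟩
  apply sq_eq_of_nonneg (norm_nonneg _) (by positivity)
  rw [h]; ring

/-- `range P` is contained in any submodule containing the relevant eigenspaces. -/
lemma range_le_of_pieces (hPs : P.IsSymmetric) (hPi : P ∘ₗ P = P) (hQs : Q.IsSymmetric)
    (hQi : Q ∘ₗ Q = Q) (S : Submodule ℂ (EuclideanSpace ℂ (Fin N)))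
    (hDD : LinearMap.range P ⊓ LinearMap.range Q ≤ S)
    (hDN : LinearMap.range P ⊓ LinearMap.ker Q ≤ S)
    (hmid : ∀ c : ℝ, 0 < c → c < 1 → eigA P Q c ≤ S) :
    LinearMap.range P ≤ S := by
  have htop : (⨆ μ, Module.End.eigenspace (P ∘ₗ Q ∘ₗ P) μ) = ⊤ :=
    Submodule.orthogonal_eq_bot_iff.mp
      ((opA_symm hPs hQs).orthogonalComplement_iSup_eigenspaces_eq_bot)
  have hrange : LinearMap.range P = Submodule.map P ⊤ := (Submodule.map_top P).symm
  rw [hrange, ← htop, Submodule.map_iSup]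
  apply iSup_le
  intro μ
  rcases eq_or_ne (Module.End.eigenspace (P ∘ₗ Q ∘ₗ P) μ) ⊥ with hbot | hne
  · rw [hbot, Submodule.map_bot]
    exact bot_le
  · obtain ⟨c, rfl, hc0, hc1⟩ := eig_nonbot_real hPs hPi hQs hQi hne
    rcases eq_or_lt_of_le hc0 with h0 | h0
    · -- c = 0
      rintro _ ⟨x, hx, rfl⟩
      apply hDN
      have hx0 : x ∈ eigA P Q 0 := by
        rw [eigA, show ((0:ℝ):ℂ) = (c:ℂ) from by exact_mod_cast h0]
        exact hx
      exact ⟨⟨x, rfl⟩, LinearMap.mem_ker.mpr ((mem_eigA_zero hPs hQs hQi).mp hx0)⟩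
    · rcases eq_or_lt_of_le hc1 with h1 | h1
      · -- c = 1
        rintro _ ⟨x, hx, rfl⟩
        apply hDD
        have hx1 : x ∈ eigA P Q 1 := by
          rw [eigA, show ((1:ℝ):ℂ) = (c:ℂ) from by exact_mod_cast h1.symm]
          exact hx
        rw [eigA_one hPs hPi hQs hQi] at hx1
        rwa [(mem_range_iff hPi).mp hx1.1]
      · -- 0 < c < 1
        rintro _ ⟨x, hx, rfl⟩
        have hx' : x ∈ eigA P Q c := hx
        rw [(mem_range_iff hPi).mp (eigA_le_range hPi h0.ne' hx')]
        exact hmid c h0 h1 hx'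

lemma mem_eigA_one_of (hQi : Q ∘ₗ Q = Q) {x : EuclideanSpace ℂ (Fin N)}
    (hx : P x = x) (hy : Q x = x) : x ∈ eigA P Q 1 := by
  rw [mem_eigA, hx, hy, hx]
  simp

lemma mem_eigA_zero_of (hPs : P.IsSymmetric) (hQs : Q.IsSymmetric) (hQi : Q ∘ₗ Q = Q)
    {x : EuclideanSpace ℂ (Fin N)} (hx : P x = x) (hy : Q x = 0) : x ∈ eigA P Q 0 := by
  rw [mem_eigA_zero hPs hQs hQi, hx, hy]

lemma exists_index {c : ℝ} (hc : c ∈ Set.Ioo (0:ℝ) 1) (hne : eigA P Q c ≠ ⊥) :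
    ∃ i, Real.cos (gammaFun P Q i) ^ 2 = c := by
  set a := Real.arccos (Real.sqrt c) with ha_def
  have hs0 : 0 < Real.sqrt c := Real.sqrt_pos.mpr hc.1
  have hs1 : Real.sqrt c < 1 := by
    rw [show (1:ℝ) = Real.sqrt 1 from (Real.sqrt_one).symm]
    exact Real.sqrt_lt_sqrt hc.1.le hc.2
  have ha : a ∈ Set.Ioo 0 (π / 2) :=
    ⟨Real.arccos_pos.mpr hs1, Real.arccos_lt_pi_div_two.mpr hs0⟩
  have hcos : Real.cos a ^ 2 = c := by
    rw [ha_def, Real.cos_arccos (by linarith) hs1.le, Real.sq_sqrt hc.1.le]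
  have hmem : a ∈ angleSet P Q := ⟨ha, by rw [hcos]; exact hne⟩
  have hmem' : a ∈ (angleSet_finite P Q).toFinset := (Set.Finite.mem_toFinset _).mpr hmem
  have h2 : a ∈ Set.range (gammaFun P Q) := by
    show a ∈ Set.range ⇑((angleSet_finite P Q).toFinset.orderEmbOfFin rfl)
    rw [Finset.range_orderEmbOfFin]
    exact_mod_cast hmem'
  obtain ⟨i, hi⟩ := h2
  exact ⟨i, by rw [hi, hcos]⟩

lemma gammaFun_Ioo (P Q : EuclideanSpace ℂ (Fin N) →ₗ[ℂ] EuclideanSpace ℂ (Fin N))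
    (i : Fin (kVal P Q)) : gammaFun P Q i ∈ Set.Ioo 0 (π / 2) :=
  (gammaFun_mem P Q i).1

lemma gammaFun_eigA_ne_bot (P Q : EuclideanSpace ℂ (Fin N) →ₗ[ℂ] EuclideanSpace ℂ (Fin N))
    (i : Fin (kVal P Q)) : eigA P Q (Real.cos (gammaFun P Q i) ^ 2) ≠ ⊥ :=
  (gammaFun_mem P Q i).2

section Existence
variable (hPs : P.IsSymmetric) (hPi : P ∘ₗ P = P) (hQs : Q.IsSymmetric) (hQi : Q ∘ₗ Q = Q)

include hPs hPi hQs hQi in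
/-- Orthogonality of each corner to the middle eigenspaces. -/
lemma corner_ortho_eig {c : ℝ} (hc : c ∈ Set.Ioo (0:ℝ) 1) :
    (LinearMap.range P ⊓ LinearMap.range Q).IsOrtho (eigA P Q c) ∧
    (LinearMap.range P ⊓ LinearMap.range Q).IsOrtho (eigA Q P c) ∧
    (LinearMap.ker P ⊓ LinearMap.range Q).IsOrtho (eigA P Q c) ∧
    (LinearMap.ker P ⊓ LinearMap.range Q).IsOrtho (eigA Q P c) ∧
    (LinearMap.range P ⊓ LinearMap.ker Q).IsOrtho (eigA P Q c) ∧
    (LinearMap.range P ⊓ LinearMap.ker Q).IsOrtho (eigA Q P c) ∧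
    (LinearMap.ker P ⊓ LinearMap.ker Q).IsOrtho (eigA P Q c) ∧
    (LinearMap.ker P ⊓ LinearMap.ker Q).IsOrtho (eigA Q P c) := by
  have h1c : (1:ℝ) ≠ c := hc.2.ne'
  have h0c : (0:ℝ) ≠ c := hc.1.ne
  have hDD_A : LinearMap.range P ⊓ LinearMap.range Q ≤ eigA P Q 1 := by
    rintro x ⟨h1, h2⟩
    exact mem_eigA_one_of hQi ((mem_range_iff hPi).mp h1) ((mem_range_iff hQi).mp h2)
  have hDD_B : LinearMap.range P ⊓ LinearMap.range Q ≤ eigA Q P 1 := by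
    rintro x ⟨h1, h2⟩
    exact mem_eigA_one_of hPi ((mem_range_iff hQi).mp h2) ((mem_range_iff hPi).mp h1)
  have hND_B : LinearMap.ker P ⊓ LinearMap.range Q ≤ eigA Q P 0 := by
    rintro x ⟨h1, h2⟩
    exact mem_eigA_zero_of hQs hPs hPi ((mem_range_iff hQi).mp h2) (LinearMap.mem_ker.mp h1)
  have hDN_A : LinearMap.range P ⊓ LinearMap.ker Q ≤ eigA P Q 0 := by
    rintro x ⟨h1, h2⟩
    exact mem_eigA_zero_of hPs hQs hQi ((mem_range_iff hPi).mp h1) (LinearMap.mem_ker.mp h2)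
  refine ⟨?_, ?_, ?_, ?_, ?_, ?_, ?_, ?_⟩
  · exact (eigA_isOrtho hPs hQs h1c).mono hDD_A le_rfl
  · exact (eigA_isOrtho hQs hPs h1c).mono hDD_B le_rfl
  · exact ((isOrtho_range_ker hPs).symm).mono inf_le_left (eigA_le_range hPi h0c.symm)
  · exact (eigA_isOrtho hQs hPs h0c).mono hND_B le_rfl
  · exact (eigA_isOrtho hPs hQs h0c).mono hDN_A le_rfl
  · exact ((isOrtho_range_ker hQs).symm).mono inf_le_right (eigA_le_range hQi h0c.symm)
  · exact ((isOrtho_range_ker hPs).symm).mono inf_le_left (eigA_le_range hPi h0c.symm)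
  · exact ((isOrtho_range_ker hQs).symm).mono inf_le_right (eigA_le_range hQi h0c.symm)

include hPs hPi hQs hQi in
lemma EFun_ortho {i j : Fin (kVal P Q)} (hij : i ≠ j) :
    (EFun P Q i).IsOrtho (EFun P Q j) := by
  set ci := Real.cos (gammaFun P Q i) ^ 2
  set cj := Real.cos (gammaFun P Q j) ^ 2
  have hi := gammaFun_Ioo P Q i
  have hj := gammaFun_Ioo P Q j
  have hci := cos_sq_mem_Ioo hi
  have hcj := cos_sq_mem_Ioo hj
  have hcij : ci ≠ cj := by
    intro h
    exact hij ((gammaFun_strictMono P Q).injective (cos_sq_injOn hi hj h))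
  rw [EFun, EFun, Submodule.isOrtho_sup_left]
  constructor <;> rw [Submodule.isOrtho_sup_right]
  · exact ⟨eigA_isOrtho hPs hQs hcij, eigA_isOrtho_eigB hPs hPi hQs hQi hci.1.ne' hcj.1.ne' hcij⟩
  · exact ⟨eigA_isOrtho_eigB hQs hQi hPs hPi hci.1.ne' hcj.1.ne' hcij, eigA_isOrtho hQs hPs hcij⟩

include hPs hPi hQs hQi in
lemma EFun_part (i : Fin (kVal P Q)) :
    IsAngularPart P Q (gammaFun P Q i) (EFun P Q i) := by
  set a := gammaFun P Q i
  set c := Real.cos a ^ 2 with hc_def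
  have ha := gammaFun_Ioo P Q i
  have hcIoo := cos_sq_mem_Ioo ha
  have hne := gammaFun_eigA_ne_bot P Q i
  have hinfP : EFun P Q i ⊓ LinearMap.range P = eigA P Q c :=
    inf_sup_range hPs hPi hQs hQi hcIoo.1 hcIoo.2
  have hinfQ : EFun P Q i ⊓ LinearMap.range Q = eigA Q P c := by
    have h := inf_sup_range hQs hQi hPs hPi hcIoo.1 hcIoo.2
    rw [show eigA Q P c ⊔ eigA P Q c = EFun P Q i from sup_comm _ _] at h
    exact h
  refine ⟨?_, ?_, ?_, ?_, ?_⟩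
  · intro h
    apply hne
    rw [← le_bot_iff, ← h]
    exact le_sup_left
  · rw [hinfP, hinfQ]; rfl
  · rw [hinfP, hinfQ]
    exact finrank_eigA_eq hPs hPi hQs hQi hcIoo.1
  · intro x hx
    rw [hinfP] at hx
    exact norm_eigA_cos ha hPs hPi hQs hQi hx
  · intro y hy
    rw [hinfQ] at hy
    exact norm_eigA_cos ha hQs hQi hPs hPi hy

include hPs hPi hQs hQi in
lemma construction_top :
    (LinearMap.range P ⊓ LinearMap.range Q) ⊔ (LinearMap.ker P ⊓ LinearMap.range Q) ⊔
      (LinearMap.range P ⊓ LinearMap.ker Q) ⊔ (LinearMap.ker P ⊓ LinearMap.ker Q) ⊔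
      (⨆ i, EFun P Q i) = ⊤ := by
  set S := (LinearMap.range P ⊓ LinearMap.range Q) ⊔ (LinearMap.ker P ⊓ LinearMap.range Q) ⊔
      (LinearMap.range P ⊓ LinearMap.ker Q) ⊔ (LinearMap.ker P ⊓ LinearMap.ker Q) ⊔
      (⨆ i, EFun P Q i) with hS_def
  have hDD : LinearMap.range P ⊓ LinearMap.range Q ≤ S :=
    le_sup_of_le_left (le_sup_of_le_left (le_sup_of_le_left le_sup_left))
  have hND : LinearMap.ker P ⊓ LinearMap.range Q ≤ S :=
    le_sup_of_le_left (le_sup_of_le_left (le_sup_of_le_left le_sup_right))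
  have hDN : LinearMap.range P ⊓ LinearMap.ker Q ≤ S :=
    le_sup_of_le_left (le_sup_of_le_left le_sup_right)
  have hNN : LinearMap.ker P ⊓ LinearMap.ker Q ≤ S :=
    le_sup_of_le_left le_sup_right
  have hmid : ∀ c : ℝ, 0 < c → c < 1 → eigA P Q c ≤ S := by
    intro c hc0 hc1
    rcases eq_or_ne (eigA P Q c) ⊥ with h | h
    · rw [h]; exact bot_le
    · obtain ⟨i, hi⟩ := exists_index (P := P) (Q := Q) ⟨hc0, hc1⟩ h
      calc eigA P Q c = eigA P Q (Real.cos (gammaFun P Q i) ^ 2) := by rw [hi]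
        _ ≤ EFun P Q i := le_sup_left
        _ ≤ ⨆ j, EFun P Q j := le_iSup _ i
        _ ≤ S := le_sup_right
  have hmid' : ∀ c : ℝ, 0 < c → c < 1 → eigA Q P c ≤ S := by
    intro c hc0 hc1
    rcases eq_or_ne (eigA Q P c) ⊥ with h | h
    · rw [h]; exact bot_le
    · have hA : eigA P Q c ≠ ⊥ := by
        intro hbot
        apply h
        have := finrank_eigA_eq hPs hPi hQs hQi hc0
        rw [hbot, finrank_bot] at this
        rw [← Submodule.finrank_eq_zero (R := ℂ)]
        omega
      obtain ⟨i, hi⟩ := exists_index (P := P) (Q := Q) ⟨hc0, hc1⟩ hA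
      calc eigA Q P c = eigA Q P (Real.cos (gammaFun P Q i) ^ 2) := by rw [hi]
        _ ≤ EFun P Q i := le_sup_right
        _ ≤ ⨆ j, EFun P Q j := le_iSup _ i
        _ ≤ S := le_sup_right
  have hU : LinearMap.range P ≤ S := range_le_of_pieces hPs hPi hQs hQi S hDD hDN hmid
  have hW : LinearMap.range Q ≤ S := by
    apply range_le_of_pieces hQs hQi hPs hPi S
    · rw [inf_comm]; exact hDD
    · rw [inf_comm]; exact hND
    · exact hmid'
  rw [← Submodule.orthogonal_eq_bot_iff]
  rw [Submodule.eq_bot_iff]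
  intro z hz
  have hPz : P z = 0 := by
    have h0 : ⟪P z, z⟫_ℂ = 0 := (Submodule.mem_orthogonal S z).mp hz (P z) (hU ⟨z, rfl⟩)
    have h1 : ⟪z, P z⟫_ℂ = 0 := by rw [← inner_conj_symm, h0, map_zero]
    rw [inner_proj_self hPs hPi] at h1
    have : ‖P z‖ = 0 := by exact_mod_cast pow_eq_zero_iff two_ne_zero |>.mp h1
    exact norm_eq_zero.mp this
  have hQz : Q z = 0 := by
    have h0 : ⟪Q z, z⟫_ℂ = 0 := (Submodule.mem_orthogonal S z).mp hz (Q z) (hW ⟨z, rfl⟩)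
    have h1 : ⟪z, Q z⟫_ℂ = 0 := by rw [← inner_conj_symm, h0, map_zero]
    rw [inner_proj_self hQs hQi] at h1
    have : ‖Q z‖ = 0 := by exact_mod_cast pow_eq_zero_iff two_ne_zero |>.mp h1
    exact norm_eq_zero.mp this
  have hzNN : z ∈ S := hNN ⟨LinearMap.mem_ker.mpr hPz, LinearMap.mem_ker.mpr hQz⟩
  have := (Submodule.mem_orthogonal S z).mp hz z hzNN
  exact inner_self_eq_zero.mp this

include hPs hPi hQs hQi in
theorem construction_spec :
    IsAngularDecomposition P Q (kVal P Q) (gammaFun P Q) (EFun P Q) := by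
  have hcorner := fun (i : Fin (kVal P Q)) =>
    corner_ortho_eig hPs hPi hQs hQi (cos_sq_mem_Ioo (gammaFun_Ioo P Q i))
  refine ⟨gammaFun_strictMono P Q, ?_, construction_top hPs hPi hQs hQi, ?_, ?_, ?_, ?_, ?_, ?_,
    ?_, fun i j hij => EFun_ortho hPs hPi hQs hQi hij, EFun_part hPs hPi hQs hQi⟩
  · intro i
    exact ⟨(gammaFun_Ioo P Q i).1, (gammaFun_Ioo P Q i).2⟩
  · exact (isOrtho_range_ker hPs).mono inf_le_left inf_le_left
  · exact (isOrtho_range_ker hQs).mono inf_le_right inf_le_right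
  · exact (isOrtho_range_ker hPs).mono inf_le_left inf_le_left
  · exact (isOrtho_range_ker hQs).mono inf_le_right inf_le_right
  · exact (isOrtho_range_ker hQs).mono inf_le_right inf_le_right
  · exact (isOrtho_range_ker hPs).mono inf_le_left inf_le_left
  · intro i
    obtain ⟨h1, h2, h3, h4, h5, h6, h7, h8⟩ := hcorner i
    refine ⟨?_, ?_, ?_, ?_⟩ <;> rw [EFun, Submodule.isOrtho_sup_right]
    · exact ⟨h1, h2⟩
    · exact ⟨h3, h4⟩
    · exact ⟨h5, h6⟩
    · exact ⟨h7, h8⟩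

end Existence

set_option maxHeartbeats 1000000 in
lemma mem_eigA_of_norms (hPs : P.IsSymmetric) (hPi : P ∘ₗ P = P) (hQs : Q.IsSymmetric)
    (hQi : Q ∘ₗ Q = Q) {cr : ℝ} (hcr : 0 ≤ cr) {x : EuclideanSpace ℂ (Fin N)}
    (hPx : P x = x) (hnx : ‖Q x‖ = cr * ‖x‖) (hnw : ‖P (Q x)‖ = cr * ‖Q x‖) :
    x ∈ eigA P Q (cr ^ 2) := by
  set w := Q x with hw_def
  have hinner : ⟪P w, x⟫_ℂ = ((‖Q x‖ : ℂ)) ^ 2 := by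
    rw [hPs w x, hPx, hw_def, ← inner_conj_symm, inner_proj_self hQs hQi]
    rw [map_pow, Complex.conj_ofReal]
  have hre : RCLike.re (⟪P w, ((cr ^ 2 : ℝ) : ℂ) • x⟫_ℂ) = cr ^ 2 * ‖Q x‖ ^ 2 := by
    rw [inner_smul_right, hinner]
    have h' : ((cr ^ 2 : ℝ) : ℂ) * ((‖Q x‖ : ℂ)) ^ 2 = (((cr ^ 2 * ‖Q x‖ ^ 2 : ℝ)) : ℂ) := by
      push_cast; ring
    rw [h']
    exact RCLike.ofReal_re _
  have hnPw : ‖P w‖ ^ 2 = cr ^ 2 * ‖Q x‖ ^ 2 := by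
    rw [hnw]
    ring
  have hnsx : ‖((cr ^ 2 : ℝ) : ℂ) • x‖ ^ 2 = cr ^ 2 * ‖Q x‖ ^ 2 := by
    rw [norm_smul, hnx]
    simp only [Complex.norm_real, Real.norm_eq_abs]
    rw [abs_of_nonneg (by positivity)]
    ring
  have hzero : ‖P w - ((cr ^ 2 : ℝ) : ℂ) • x‖ ^ 2 = 0 := by
    have expand : ‖P w - ((cr ^ 2 : ℝ) : ℂ) • x‖ ^ 2
        = ‖P w‖ ^ 2 - 2 * RCLike.re (⟪P w, ((cr ^ 2 : ℝ) : ℂ) • x⟫_ℂ)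
          + ‖((cr ^ 2 : ℝ) : ℂ) • x‖ ^ 2 := by
      exact norm_sub_sq (𝕜 := ℂ) (P w) (((cr ^ 2 : ℝ) : ℂ) • x)
    rw [expand, hre, hnPw, hnsx]
    ring
  have hPw := sub_eq_zero.mp (norm_eq_zero.mp ((pow_eq_zero_iff two_ne_zero).mp hzero))
  rw [mem_eigA, hPx]
  push_cast
  exact_mod_cast hPw

lemma mem_of_isOrtho_rest {k : ℕ} (F : Fin k → Submodule ℂ (EuclideanSpace ℂ (Fin N)))
    (hortho : Pairwise fun i j => (F i).IsOrtho (F j)) (i : Fin k)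
    {z : EuclideanSpace ℂ (Fin N)}
    (hz : z ∈ ⨆ l, F l) (horth : ∀ j, j ≠ i → ∀ t ∈ F j, ⟪t, z⟫_ℂ = 0) : z ∈ F i := by
  set T := ⨆ j, ⨆ _ : j ≠ i, F j with hT_def
  have hsplit : (⨆ l, F l) = F i ⊔ T := by
    apply le_antisymm
    · apply iSup_le; intro l
      by_cases h : l = i
      · subst h; exact le_sup_left
      · exact le_sup_of_le_right (le_iSup_of_le l (le_iSup_of_le h le_rfl))
    · exact sup_le (le_iSup F i) (iSup_le fun j => iSup_le fun hj => le_iSup F j)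
  have hto : (F i).IsOrtho T := by
    rw [Submodule.isOrtho_iSup_right]; intro j
    rw [Submodule.isOrtho_iSup_right]; intro hj
    exact hortho (Ne.symm hj)
  have hzT : ∀ t ∈ T, ⟪t, z⟫_ℂ = 0 := by
    intro t ht
    refine Submodule.iSup_induction (motive := fun w => ⟪w, z⟫_ℂ = 0) _ ht (fun j x hx => ?_)
      (inner_zero_left z) (fun a b ha hb => by show ⟪a + b, z⟫_ℂ = 0; rw [inner_add_left, ha, hb, add_zero])
    by_cases hj : j = i
    · subst hj
      rw [iSup_neg (by simp)] at hx
      rw [(Submodule.mem_bot ℂ).mp hx, inner_zero_left]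
    · rw [iSup_pos hj] at hx
      exact horth j hj x hx
  rw [hsplit] at hz
  exact ortho_split hto hz hzT

section Uniqueness
variable (hPs : P.IsSymmetric) (hPi : P ∘ₗ P = P) (hQs : Q.IsSymmetric) (hQi : Q ∘ₗ Q = Q)
variable {k : ℕ} {γ : Fin k → ℝ} {E : Fin k → Submodule ℂ (EuclideanSpace ℂ (Fin N))}

include hPs hPi hQs hQi in
set_option maxHeartbeats 1000000 in
theorem uniq_core
    (hγ : ∀ i, γ i ∈ Set.Ioo 0 (π / 2))
    (hγinj : Function.Injective γ)
    (htop : (LinearMap.range P ⊓ LinearMap.range Q) ⊔ (LinearMap.ker P ⊓ LinearMap.range Q) ⊔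
      (LinearMap.range P ⊓ LinearMap.ker Q) ⊔ (LinearMap.ker P ⊓ LinearMap.ker Q) ⊔
      (⨆ i, E i) = ⊤)
    (hcE : ∀ i, (LinearMap.range P ⊓ LinearMap.range Q).IsOrtho (E i) ∧
        (LinearMap.ker P ⊓ LinearMap.range Q).IsOrtho (E i) ∧
        (LinearMap.range P ⊓ LinearMap.ker Q).IsOrtho (E i) ∧
        (LinearMap.ker P ⊓ LinearMap.ker Q).IsOrtho (E i))
    (hEE : ∀ i j, i ≠ j → (E i).IsOrtho (E j))
    (hEne : ∀ i, E i ≠ ⊥)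
    (hsum : ∀ i, E i = (E i ⊓ LinearMap.range P) ⊔ (E i ⊓ LinearMap.range Q))
    (hrank : ∀ i, Module.finrank ℂ (E i ⊓ LinearMap.range P : Submodule ℂ (EuclideanSpace ℂ (Fin N)))
      = Module.finrank ℂ (E i ⊓ LinearMap.range Q : Submodule ℂ (EuclideanSpace ℂ (Fin N))))
    (hnormP : ∀ i, ∀ x ∈ E i ⊓ LinearMap.range P, ‖Q x‖ = Real.cos (γ i) * ‖x‖)
    (hnormQ : ∀ i, ∀ y ∈ E i ⊓ LinearMap.range Q, ‖P y‖ = Real.cos (γ i) * ‖y‖) :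
    (∀ i, E i ⊓ LinearMap.range P = eigA P Q (Real.cos (γ i) ^ 2)) ∧
    (∀ i, E i ⊓ LinearMap.range P ≠ ⊥) ∧
    (∀ c, c ∈ Set.Ioo (0:ℝ) 1 → eigA P Q c ≠ ⊥ → ∃ i, Real.cos (γ i) ^ 2 = c) := by
  set DD := LinearMap.range P ⊓ LinearMap.range Q with hDD_def
  set ND := LinearMap.ker P ⊓ LinearMap.range Q with hND_def
  set DN := LinearMap.range P ⊓ LinearMap.ker Q with hDN_def
  set NN := LinearMap.ker P ⊓ LinearMap.ker Q with hNN_def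
  set C := DD ⊔ ND ⊔ DN ⊔ NN with hC_def
  set V1 := ⨆ i, E i with hV1_def
  have hDDleC : DD ≤ C := le_sup_of_le_left (le_sup_of_le_left le_sup_left)
  have hNDleC : ND ≤ C := le_sup_of_le_left (le_sup_of_le_left le_sup_right)
  have hcos_pos : ∀ i, 0 < Real.cos (γ i) := fun i =>
    Real.cos_pos_of_mem_Ioo ⟨by linarith [(hγ i).1, Real.pi_div_two_pos], (hγ i).2⟩
  have hcos_lt1 : ∀ i, Real.cos (γ i) < 1 := fun i => by
    have := cos_sq_mem_Ioo (hγ i)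
    nlinarith [hcos_pos i, this.2]
  have hcIoo : ∀ i, Real.cos (γ i) ^ 2 ∈ Set.Ioo (0:ℝ) 1 := fun i => cos_sq_mem_Ioo (hγ i)
  have hCorth : C.IsOrtho V1 := by
    rw [hV1_def, Submodule.isOrtho_iSup_right]
    intro i
    obtain ⟨h1, h2, h3, h4⟩ := hcE i
    rw [hC_def]
    exact Submodule.isOrtho_sup_left.mpr
      ⟨Submodule.isOrtho_sup_left.mpr ⟨Submodule.isOrtho_sup_left.mpr ⟨h1, h2⟩, h3⟩, h4⟩
  have hV1C : V1 = Cᗮ := ortho_compl_eq hCorth htop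
  have hEleC : ∀ i, E i ≤ Cᗮ := fun i => hV1C ▸ le_iSup E i
  -- the two halves of each piece intersect trivially
  have hinfbot : ∀ i, (E i ⊓ LinearMap.range P) ⊓ (E i ⊓ LinearMap.range Q) = ⊥ := by
    intro i
    rw [Submodule.eq_bot_iff]
    rintro x ⟨hx1, hx2⟩
    have hn := hnormP i x hx1
    have hQx : Q x = x := (mem_range_iff hQi).mp hx2.2
    rw [hQx] at hn
    by_contra hx0
    have hxn : 0 < ‖x‖ := norm_pos_iff.mpr hx0
    nlinarith [hcos_lt1 i]
  -- dimension bookkeeping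
  have hEEP : Pairwise fun i j => ((E i ⊓ LinearMap.range P : Submodule ℂ (EuclideanSpace ℂ (Fin N)))).IsOrtho (E j ⊓ LinearMap.range P) :=
    fun i j hij => (hEE i j hij).mono inf_le_left inf_le_left
  have hEEQ : Pairwise fun i j => ((E i ⊓ LinearMap.range Q : Submodule ℂ (EuclideanSpace ℂ (Fin N)))).IsOrtho (E j ⊓ LinearMap.range Q) :=
    fun i j hij => (hEE i j hij).mono inf_le_left inf_le_left
  have hrankE : ∀ i, Module.finrank ℂ (E i)
      = 2 * Module.finrank ℂ (E i ⊓ LinearMap.range P : Submodule ℂ (EuclideanSpace ℂ (Fin N))) := by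
    intro i
    have h := Submodule.finrank_sup_add_finrank_inf_eq
      (E i ⊓ LinearMap.range P) (E i ⊓ LinearMap.range Q)
    rw [hinfbot i, finrank_bot, ← hsum i, ← hrank i] at h
    omega
  set r : Fin k → ℕ := fun i =>
    Module.finrank ℂ (E i ⊓ LinearMap.range P : Submodule ℂ (EuclideanSpace ℂ (Fin N))) with hr_def
  have hrankV1 : Module.finrank ℂ V1 = ∑ i, 2 * r i := by
    rw [hV1_def, finrank_iSup_eq_sum E hEE]
    exact Finset.sum_congr rfl fun i _ => hrankE i
  set U1 := LinearMap.range P ⊓ V1 with hU1_def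
  set W1 := LinearMap.range Q ⊓ V1 with hW1_def
  have hUsub : (⨆ i, (E i ⊓ LinearMap.range P)) ≤ U1 :=
    iSup_le fun i => le_inf inf_le_right (le_trans inf_le_left (le_iSup E i))
  have hWsub : (⨆ i, (E i ⊓ LinearMap.range Q)) ≤ W1 :=
    iSup_le fun i => le_inf inf_le_right (le_trans inf_le_left (le_iSup E i))
  have hUWbot : U1 ⊓ W1 = ⊥ := by
    rw [Submodule.eq_bot_iff]
    rintro x ⟨⟨hxP, hxV⟩, ⟨hxQ, -⟩⟩
    have hxC : x ∈ C := hDDleC (show x ∈ DD from ⟨hxP, hxQ⟩)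
    have hxCc : x ∈ Cᗮ := hV1C ▸ hxV
    exact inner_self_eq_zero.mp ((Submodule.mem_orthogonal C x).mp hxCc x hxC)
  have hrU : Module.finrank ℂ (⨆ i, (E i ⊓ LinearMap.range P) : Submodule ℂ (EuclideanSpace ℂ (Fin N))) = ∑ i, r i :=
    finrank_iSup_eq_sum _ hEEP
  have hrW : Module.finrank ℂ (⨆ i, (E i ⊓ LinearMap.range Q) : Submodule ℂ (EuclideanSpace ℂ (Fin N))) = ∑ i, r i := by
    rw [finrank_iSup_eq_sum _ hEEQ]
    exact Finset.sum_congr rfl fun i _ => (hrank i).symm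
  have hsumleq : Module.finrank ℂ U1 + Module.finrank ℂ W1 ≤ ∑ i, 2 * r i := by
    have h := Submodule.finrank_sup_add_finrank_inf_eq U1 W1
    rw [hUWbot, finrank_bot] at h
    have hle : U1 ⊔ W1 ≤ V1 := sup_le inf_le_right inf_le_right
    have := Submodule.finrank_mono hle
    rw [hrankV1] at this
    omega
  have hU1eq : U1 = ⨆ i, (E i ⊓ LinearMap.range P) := by
    refine (Submodule.eq_of_le_of_finrank_le hUsub ?_).symm
    rw [hrU]
    have h1 : ∑ i, r i ≤ Module.finrank ℂ U1 := hrU ▸ Submodule.finrank_mono hUsub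
    have h2 : ∑ i, r i ≤ Module.finrank ℂ W1 := hrW ▸ Submodule.finrank_mono hWsub
    have h3 : ∑ i, 2 * r i = 2 * ∑ i, r i := by rw [Finset.mul_sum]
    omega
  have hW1eq : W1 = ⨆ i, (E i ⊓ LinearMap.range Q) := by
    refine (Submodule.eq_of_le_of_finrank_le hWsub ?_).symm
    rw [hrW]
    have h1 : ∑ i, r i ≤ Module.finrank ℂ U1 := hrU ▸ Submodule.finrank_mono hUsub
    have h2 : ∑ i, r i ≤ Module.finrank ℂ W1 := hrW ▸ Submodule.finrank_mono hWsub
    have h3 : ∑ i, 2 * r i = 2 * ∑ i, r i := by rw [Finset.mul_sum]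
    omega
  -- invariance of `Cᗮ` under `Q`
  have hQinv : ∀ z ∈ Cᗮ, Q z ∈ Cᗮ := by
    intro z hz
    rw [Submodule.mem_orthogonal]
    intro y hy
    rw [hC_def] at hy
    obtain ⟨y3, hy3, d, hd, rfl⟩ := Submodule.mem_sup.mp hy
    obtain ⟨y2, hy2, c3, hc3, rfl⟩ := Submodule.mem_sup.mp hy3
    obtain ⟨a, ha, b, hb, rfl⟩ := Submodule.mem_sup.mp hy2
    have hz' := (Submodule.mem_orthogonal C z).mp hz
    have hCa : a ∈ C := hDDleC ha
    have hCb : b ∈ C := hNDleC hb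
    have ha' : ⟪a, Q z⟫_ℂ = 0 := by
      rw [← hQs a z, (mem_range_iff hQi).mp ha.2]
      exact hz' a hCa
    have hb' : ⟪b, Q z⟫_ℂ = 0 := by
      rw [← hQs b z, (mem_range_iff hQi).mp hb.2]
      exact hz' b hCb
    have hc' : ⟪c3, Q z⟫_ℂ = 0 := by
      rw [← hQs c3 z, LinearMap.mem_ker.mp hc3.2, inner_zero_left]
    have hd' : ⟪d, Q z⟫_ℂ = 0 := by
      rw [← hQs d z, LinearMap.mem_ker.mp hd.2, inner_zero_left]
    rw [inner_add_left, inner_add_left, inner_add_left, ha', hb', hc', hd']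
    ring
  -- key step : `Q` maps `E i ⊓ range P` into `E i ⊓ range Q`
  have hkey : ∀ i, ∀ x ∈ E i ⊓ LinearMap.range P, Q x ∈ E i ⊓ LinearMap.range Q := by
    rintro i x ⟨hxE, hxP⟩
    have hxC : Q x ∈ Cᗮ := hQinv x (hEleC i hxE)
    have hxW1 : Q x ∈ ⨆ l, (E l ⊓ LinearMap.range Q) := by
      rw [← hW1eq]
      exact ⟨⟨x, rfl⟩, hV1C ▸ hxC⟩
    refine Submodule.mem_inf.mpr ⟨?_, ?_⟩
    · have := mem_of_isOrtho_rest _ hEEQ i hxW1 ?_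
      · exact this.1
      · intro j hj t ht
        have hQt : Q t = t := (mem_range_iff hQi).mp ht.2
        rw [← hQs t x, hQt]
        exact Submodule.isOrtho_iff_inner_eq.mp (hEE j i hj) t ht.1 x hxE
    · exact ⟨x, rfl⟩
  -- the pieces are eigenspaces
  have hle : ∀ i, E i ⊓ LinearMap.range P ≤ eigA P Q (Real.cos (γ i) ^ 2) := by
    intro i x hx
    obtain ⟨hxE, hxP⟩ := hx
    have hPx : P x = x := (mem_range_iff hPi).mp hxP
    have hwmem : Q x ∈ E i ⊓ LinearMap.range Q := hkey i x ⟨hxE, hxP⟩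
    have hnx : ‖Q x‖ = Real.cos (γ i) * ‖x‖ := hnormP i x ⟨hxE, hxP⟩
    have hnw : ‖P (Q x)‖ = Real.cos (γ i) * ‖Q x‖ := hnormQ i (Q x) hwmem
    exact mem_eigA_of_norms hPs hPi hQs hQi (hcos_pos i).le hPx hnx hnw
  have hnebot : ∀ i, E i ⊓ LinearMap.range P ≠ ⊥ := by
    intro i hbot
    apply hEne i
    have h0 : r i = 0 := by
      rw [hr_def]
      simp only
      rw [hbot, finrank_bot]
    have hQ0 : (E i ⊓ LinearMap.range Q : Submodule ℂ (EuclideanSpace ℂ (Fin N))) = ⊥ := by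
      rw [← Submodule.finrank_eq_zero (R := ℂ), ← hrank i]
      exact h0
    rw [hsum i, hbot, hQ0, sup_bot_eq]
  -- eigenspaces with other eigenvalues are trivial
  have heigle : ∀ c, c ∈ Set.Ioo (0:ℝ) 1 → eigA P Q c ≤ ⨆ i, (E i ⊓ LinearMap.range P) := by
    intro c hc
    rw [← hU1eq]
    refine le_inf (eigA_le_range hPi hc.1.ne') ?_
    rw [hV1C]
    obtain ⟨h1, -, h3, -, h5, -, h7, -⟩ := corner_ortho_eig hPs hPi hQs hQi hc
    have : C.IsOrtho (eigA P Q c) := Submodule.isOrtho_sup_left.mpr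
      ⟨Submodule.isOrtho_sup_left.mpr ⟨Submodule.isOrtho_sup_left.mpr ⟨h1, h3⟩, h5⟩, h7⟩
    exact this.symm
  have hEP_eig : ∀ j, E j ⊓ LinearMap.range P ≤ eigA P Q (Real.cos (γ j) ^ 2) := hle
  have hchar : ∀ c, c ∈ Set.Ioo (0:ℝ) 1 → eigA P Q c ≠ ⊥ → ∃ i, Real.cos (γ i) ^ 2 = c := by
    intro c hc hne
    by_contra hnone
    push_neg at hnone
    have hortho : (eigA P Q c).IsOrtho (⨆ i, (E i ⊓ LinearMap.range P)) := by
      rw [Submodule.isOrtho_iSup_right]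
      intro j
      exact (eigA_isOrtho hPs hQs (fun h => hnone j h.symm)).mono le_rfl (hEP_eig j)
    have : (eigA P Q c).IsOrtho (eigA P Q c) := hortho.mono le_rfl (heigle c hc)
    exact hne (Submodule.isOrtho_self.mp this)
  refine ⟨?_, hnebot, hchar⟩
  intro i
  refine le_antisymm (hle i) ?_
  set c := Real.cos (γ i) ^ 2 with hc_def2
  rcases eq_or_ne (eigA P Q c) ⊥ with hbot | hne
  · rw [hbot]
    exact bot_le
  · intro x hx
    have hxsup : x ∈ ⨆ l, (E l ⊓ LinearMap.range P) := heigle c (hcIoo i) hx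
    refine mem_of_isOrtho_rest _ hEEP i hxsup ?_
    intro j hj t ht
    have hcj : Real.cos (γ j) ^ 2 ≠ c := by
      intro h
      exact hj (hγinj (cos_sq_injOn (hγ j) (hγ i) h))
    exact Submodule.isOrtho_iff_inner_eq.mp
      ((eigA_isOrtho hPs hQs hcj).mono (hEP_eig j) le_rfl) t ht x hx

end Uniqueness

end AngularAux

/-- Existence and uniqueness of the angular decomposition of `ℂ^N`
associated with a pair of orthogonal projectors `T₋, T₊`. -/
theorem exists_unique_angular_decomposition {N : ℕ} (hN : 1 ≤ N)
    (Tm Tp : EuclideanSpace ℂ (Fin N) →ₗ[ℂ] EuclideanSpace ℂ (Fin N))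
    (hTmSymm : LinearMap.IsSymmetric Tm) (hTmIdem : Tm ∘ₗ Tm = Tm)
    (hTpSymm : LinearMap.IsSymmetric Tp) (hTpIdem : Tp ∘ₗ Tp = Tp) :
    ∃ (k : ℕ) (γ : Fin k → ℝ) (E : Fin k → Submodule ℂ (EuclideanSpace ℂ (Fin N))),
      IsAngularDecomposition Tm Tp k γ E ∧
      ∀ (k' : ℕ) (γ' : Fin k' → ℝ) (E' : Fin k' → Submodule ℂ (EuclideanSpace ℂ (Fin N))),
        IsAngularDecomposition Tm Tp k' γ' E' →
          k' = k ∧ ∀ (i : Fin k') (j : Fin k), (i : ℕ) = (j : ℕ) → γ' i = γ j ∧ E' i = E j := by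


  classical
  refine ⟨AngularAux.kVal Tm Tp, AngularAux.gammaFun Tm Tp, AngularAux.EFun Tm Tp,
    AngularAux.construction_spec hTmSymm hTmIdem hTpSymm hTpIdem, ?_⟩
  intro k' γ' E' hD
  obtain ⟨hmono, hIoo, htop, _, _, _, _, _, _, hcE, hEE, hpart⟩ := hD
  have hγ : ∀ i, γ' i ∈ Set.Ioo 0 (Real.pi / 2) := fun i => ⟨(hIoo i).1, (hIoo i).2⟩
  have hγinj : Function.Injective γ' := hmono.injective
  have hEne : ∀ i, E' i ≠ ⊥ := fun i => (hpart i).1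
  have hsum : ∀ i, E' i = (E' i ⊓ LinearMap.range Tm) ⊔ (E' i ⊓ LinearMap.range Tp) :=
    fun i => (hpart i).2.1
  have hrank : ∀ i, Module.finrank ℂ (E' i ⊓ LinearMap.range Tm : Submodule ℂ (EuclideanSpace ℂ (Fin N)))
      = Module.finrank ℂ (E' i ⊓ LinearMap.range Tp : Submodule ℂ (EuclideanSpace ℂ (Fin N))) :=
    fun i => (hpart i).2.2.1
  have hnormP : ∀ i, ∀ x ∈ E' i ⊓ LinearMap.range Tm, ‖Tp x‖ = Real.cos (γ' i) * ‖x‖ :=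
    fun i => (hpart i).2.2.2.1
  have hnormQ : ∀ i, ∀ y ∈ E' i ⊓ LinearMap.range Tp, ‖Tm y‖ = Real.cos (γ' i) * ‖y‖ :=
    fun i => (hpart i).2.2.2.2
  obtain ⟨hEig, hEPne, hchar⟩ := AngularAux.uniq_core hTmSymm hTmIdem hTpSymm hTpIdem
    hγ hγinj htop hcE hEE hEne hsum hrank hnormP hnormQ
  -- swapped instance for the `Tp` side
  have htop' : (LinearMap.range Tp ⊓ LinearMap.range Tm) ⊔ (LinearMap.ker Tp ⊓ LinearMap.range Tm) ⊔
      (LinearMap.range Tp ⊓ LinearMap.ker Tm) ⊔ (LinearMap.ker Tp ⊓ LinearMap.ker Tm) ⊔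
      (⨆ i, E' i) = ⊤ := by
    rw [inf_comm (LinearMap.range Tp) (LinearMap.range Tm),
      inf_comm (LinearMap.ker Tp) (LinearMap.range Tm),
      inf_comm (LinearMap.range Tp) (LinearMap.ker Tm),
      inf_comm (LinearMap.ker Tp) (LinearMap.ker Tm),
      sup_right_comm (LinearMap.range Tm ⊓ LinearMap.range Tp)
        (LinearMap.range Tm ⊓ LinearMap.ker Tp) (LinearMap.ker Tm ⊓ LinearMap.range Tp)]
    exact htop
  have hcE' : ∀ i, (LinearMap.range Tp ⊓ LinearMap.range Tm).IsOrtho (E' i) ∧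
      (LinearMap.ker Tp ⊓ LinearMap.range Tm).IsOrtho (E' i) ∧
      (LinearMap.range Tp ⊓ LinearMap.ker Tm).IsOrtho (E' i) ∧
      (LinearMap.ker Tp ⊓ LinearMap.ker Tm).IsOrtho (E' i) := by
    intro i
    obtain ⟨h1, h2, h3, h4⟩ := hcE i
    exact ⟨by rw [inf_comm]; exact h1, by rw [inf_comm]; exact h3,
      by rw [inf_comm]; exact h2, by rw [inf_comm]; exact h4⟩
  obtain ⟨hEigQ, -, -⟩ := AngularAux.uniq_core hTpSymm hTpIdem hTmSymm hTmIdem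
    hγ hγinj htop' hcE' hEE hEne (fun i => by conv_lhs => rw [hsum i, sup_comm])
    (fun i => (hrank i).symm) hnormQ hnormP
  -- match the angle finsets
  have himg : Finset.image γ' Finset.univ = (AngularAux.angleSet_finite Tm Tp).toFinset := by
    ext a
    simp only [Finset.mem_image, Finset.mem_univ, true_and, Set.Finite.mem_toFinset]
    constructor
    · rintro ⟨i, rfl⟩
      refine ⟨hγ i, ?_⟩
      rw [← hEig i]
      exact hEPne i
    · rintro ⟨haI, hane⟩
      obtain ⟨i, hi⟩ := hchar _ (AngularAux.cos_sq_mem_Ioo haI) hane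
      exact ⟨i, AngularAux.cos_sq_injOn (hγ i) haI hi⟩
  have hk : k' = AngularAux.kVal Tm Tp := by
    have hcard := Finset.card_image_of_injective Finset.univ hγinj
    rw [himg] at hcard
    simpa [AngularAux.kVal] using hcard.symm
  subst hk
  have hγeq : γ' = AngularAux.gammaFun Tm Tp := by
    have hfs : ∀ x, γ' x ∈ (AngularAux.angleSet_finite Tm Tp).toFinset := by
      intro x
      rw [← himg]
      exact Finset.mem_image_of_mem γ' (Finset.mem_univ x)
    exact Finset.orderEmbOfFin_unique rfl hfs hmono
  refine ⟨rfl, ?_⟩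
  intro i j hij
  have hij' : i = j := Fin.ext hij
  subst hij'
  refine ⟨by rw [hγeq], ?_⟩
  rw [hsum i, hEig i, hEigQ i, hγeq]
  rfl

end
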